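/- Let M be a right proper model category and g : Y → B a morphism in M. Then g is sharp if and only if for every morphism f : X → B, the pullback square with corners X ×_B Y, X, Y, B is a homotopy cartesian square. -/

import Mathlib

open CategoryTheory CategoryTheory.Limits

universe v u

namespace Paper

variable {M : Type u} [Category.{v} M]

/-- A map `f : X ⟶ Y` is *sharp* with respect to a class `W` of weak equivalences if
for every diagram of two composable pullback squares `A → A' → X` over `B → B' → Y`
in which `j : B ⟶ B'` is a weak equivalence, the induced map `i : A ⟶ A'` is a weak
equivalence. -/
def Sharp (W : MorphismProperty M) {X Y : M} (f : X ⟶ Y) : Prop :=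
  ∀ ⦃A A' B B' : M⦄ (i : A ⟶ A') (p : A ⟶ B) (t' : A' ⟶ X) (p' : A' ⟶ B')
    (j : B ⟶ B') (g' : B' ⟶ Y),
    IsPullback t' p' f g' → IsPullback i p p' j → W j → W i

/-- The data and axioms of a (closed) model category structure on a category `M`:
classes of weak equivalences, cofibrations and fibrations, satisfying two-out-of-three,
closure under retracts, the lifting axioms, and the factorization axioms. -/
structure ModelStructure (M : Type u) [Category.{v} M] where
  W : MorphismProperty M
  Cof : MorphismProperty M
  Fib : MorphismProperty M
  w_id : ∀ X : M, W (𝟙 X)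
  w_comp : ∀ {X Y Z : M} (f : X ⟶ Y) (g : Y ⟶ Z), W f → W g → W (f ≫ g)
  w_cancel_left : ∀ {X Y Z : M} (f : X ⟶ Y) (g : Y ⟶ Z), W f → W (f ≫ g) → W g
  w_cancel_right : ∀ {X Y Z : M} (f : X ⟶ Y) (g : Y ⟶ Z), W g → W (f ≫ g) → W f
  w_retract : ∀ {X Y X' Y' : M} (f : X ⟶ Y) (f' : X' ⟶ Y') (s : X ⟶ X') (r : X' ⟶ X)
      (s' : Y ⟶ Y') (r' : Y' ⟶ Y), s ≫ r = 𝟙 X → s' ≫ r' = 𝟙 Y →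
      s ≫ f' = f ≫ s' → f' ≫ r' = r ≫ f → W f' → W f
  cof_retract : ∀ {X Y X' Y' : M} (f : X ⟶ Y) (f' : X' ⟶ Y') (s : X ⟶ X') (r : X' ⟶ X)
      (s' : Y ⟶ Y') (r' : Y' ⟶ Y), s ≫ r = 𝟙 X → s' ≫ r' = 𝟙 Y →
      s ≫ f' = f ≫ s' → f' ≫ r' = r ≫ f → Cof f' → Cof f
  fib_retract : ∀ {X Y X' Y' : M} (f : X ⟶ Y) (f' : X' ⟶ Y') (s : X ⟶ X') (r : X' ⟶ X)
      (s' : Y ⟶ Y') (r' : Y' ⟶ Y), s ≫ r = 𝟙 X → s' ≫ r' = 𝟙 Y →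
      s ≫ f' = f ≫ s' → f' ≫ r' = r ≫ f → Fib f' → Fib f
  lift_cof_w_fib : ∀ {A B X Y : M} (i : A ⟶ B) (p : X ⟶ Y),
      Cof i → W i → Fib p → HasLiftingProperty i p
  lift_cof_fib_w : ∀ {A B X Y : M} (i : A ⟶ B) (p : X ⟶ Y),
      Cof i → Fib p → W p → HasLiftingProperty i p
  fact_triv_cof_fib : ∀ {X Y : M} (f : X ⟶ Y),
      ∃ (Z : M) (i : X ⟶ Z) (p : Z ⟶ Y), Cof i ∧ W i ∧ Fib p ∧ i ≫ p = f
  fact_cof_triv_fib : ∀ {X Y : M} (f : X ⟶ Y),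
      ∃ (Z : M) (i : X ⟶ Z) (p : Z ⟶ Y), Cof i ∧ Fib p ∧ W p ∧ i ≫ p = f

/-- A model structure is *right proper* if the pullback of a weak equivalence along a
fibration is a weak equivalence. -/
def ModelStructure.RightProper (S : ModelStructure M) : Prop :=
  ∀ ⦃X' X Y' Y : M⦄ (i : X' ⟶ X) (g : X' ⟶ Y') (f : X ⟶ Y) (j : Y' ⟶ Y),
    IsPullback i g f j → S.Fib f → S.W j → S.W i

/-- A commutative square with corners `P, X, Y, B` is *homotopy cartesian* (with respect
to weak equivalences `W` and fibrations `F`) if for some factorizations `X ⟶ X' ⟶ B` of `f`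
and `Y ⟶ Y' ⟶ B` of `g` into a weak equivalence followed by a fibration, the induced map
`P ⟶ X' ×_B Y'` is a weak equivalence. -/
def HomotopyCartesian [HasPullbacks M] (W F : MorphismProperty M) {P X Y B : M}
    (h : P ⟶ X) (k : P ⟶ Y) (f : X ⟶ B) (g : Y ⟶ B) : Prop :=
  ∃ (X' Y' : M) (iX : X ⟶ X') (pX : X' ⟶ B) (iY : Y ⟶ Y') (pY : Y' ⟶ B)
    (_ : iX ≫ pX = f) (_ : iY ≫ pY = g)
    (w : (h ≫ iX) ≫ pX = (k ≫ iY) ≫ pY),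
    W iX ∧ F pX ∧ W iY ∧ F pY ∧ W (pullback.lift (h ≫ iX) (k ≫ iY) w)


/-- A map with the right lifting property against all trivial cofibrations is a
fibration (retract argument). -/
lemma ModelStructure.fib_of_rlp (S : ModelStructure M) {E' B' : M} (p' : E' ⟶ B')
    (h : ∀ ⦃A C : M⦄ (i : A ⟶ C), S.Cof i → S.W i → HasLiftingProperty i p') :
    S.Fib p' := by
  obtain ⟨Z, i, q, hc, hw, hf, hcomp⟩ := S.fact_triv_cof_fib p'
  haveI := h i hc hw
  have sq : CommSq (𝟙 E') i p' q := ⟨by simp [hcomp]⟩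
  exact S.fib_retract p' q i sq.lift (𝟙 B') (𝟙 B') sq.fac_left (Category.comp_id _)
    (by simp [hcomp]) (by simp [sq.fac_right]) hf

/-- Fibrations are stable under pullback. -/
lemma ModelStructure.fib_pullback (S : ModelStructure M) {E' E B' B : M}
    {k : E' ⟶ E} {p' : E' ⟶ B'} {p : E ⟶ B} {q : B' ⟶ B}
    (hpb : IsPullback k p' p q) (hp : S.Fib p) : S.Fib p' := by
  refine S.fib_of_rlp p' ?_
  intro A C i hc hw
  haveI := S.lift_cof_w_fib i p hc hw hp
  constructor
  intro u v sq
  have sq2 : CommSq (u ≫ k) i p (v ≫ q) :=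
    ⟨by rw [Category.assoc, hpb.w, ← Category.assoc, sq.w, Category.assoc]⟩
  refine ⟨⟨⟨hpb.lift sq2.lift v (by rw [sq2.fac_right]), ?_, hpb.lift_snd _ _ _⟩⟩⟩
  apply hpb.hom_ext
  · rw [Category.assoc, hpb.lift_fst, sq2.fac_left]
  · rw [Category.assoc, hpb.lift_snd, sq.w]

lemma ModelStructure.fib_fst (S : ModelStructure M) [HasPullbacks M] {X Y B : M}
    (p : X ⟶ B) (q : Y ⟶ B) (hq : S.Fib q) : S.Fib (pullback.fst p q) :=
  S.fib_pullback (IsPullback.of_hasPullback p q).flip hq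

lemma ModelStructure.fib_snd (S : ModelStructure M) [HasPullbacks M] {X Y B : M}
    (p : X ⟶ B) (q : Y ⟶ B) (hp : S.Fib p) : S.Fib (pullback.snd p q) :=
  S.fib_pullback (IsPullback.of_hasPullback p q) hp

lemma aux_fst [HasPullbacks M] {P X₁ X₂ B Y : M} {h : P ⟶ X₁} {k : P ⟶ Y}
    {p₁ : X₁ ⟶ B} {p₂ : X₂ ⟶ B} {q : Y ⟶ B} (w : X₁ ⟶ X₂) (hw : w ≫ p₂ = p₁)
    (hpb : IsPullback h k p₁ q) :
    IsPullback (pullback.lift (h ≫ w) k (by rw [Category.assoc, hw, hpb.w]))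
      h (pullback.fst p₂ q) w := by
  have s : IsPullback
      (pullback.lift (h ≫ w) k (by rw [Category.assoc, hw, hpb.w]) ≫ pullback.snd p₂ q)
      h q (w ≫ p₂) := by
    rw [pullback.lift_snd, hw]; exact hpb.flip
  exact IsPullback.of_right s (pullback.lift_fst _ _ _) (IsPullback.of_hasPullback p₂ q).flip

lemma aux_snd [HasPullbacks M] {P X Y₁ Y₂ B : M} {h : P ⟶ X} {k : P ⟶ Y₁}
    {p : X ⟶ B} {q₁ : Y₁ ⟶ B} {q₂ : Y₂ ⟶ B} (w : Y₁ ⟶ Y₂) (hw : w ≫ q₂ = q₁)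
    (hpb : IsPullback h k p q₁) :
    IsPullback (pullback.lift h (k ≫ w) (by rw [Category.assoc, hw, hpb.w]))
      k (pullback.snd p q₂) w := by
  have s : IsPullback
      (pullback.lift h (k ≫ w) (by rw [Category.assoc, hw, hpb.w]) ≫ pullback.fst p q₂)
      k p (w ≫ q₂) := by
    rw [pullback.lift_fst, hw]; exact hpb
  exact IsPullback.of_right s (pullback.lift_snd _ _ _) (IsPullback.of_hasPullback p q₂)

/-- Key lemma: if a pullback square over `g` is homotopy cartesian, then for a fixed
factorization `g = u ≫ vh` into a weak equivalence followed by a fibration, the comparison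
map `P ⟶ X ×_B Yh` is a weak equivalence. -/
lemma key [HasFiniteLimits M] (S : ModelStructure M) (hS : S.RightProper)
    {Y B Yh : M} {g : Y ⟶ B} {u : Y ⟶ Yh} {vh : Yh ⟶ B}
    (hu : S.W u) (hv : S.Fib vh) (huv : u ≫ vh = g)
    {P X : M} {h : P ⟶ X} {k : P ⟶ Y} {f : X ⟶ B}
    (hpb : IsPullback h k f g) (hc : HomotopyCartesian S.W S.Fib h k f g) :
    S.W (pullback.lift h (k ≫ u) (by rw [Category.assoc, huv, hpb.w]) : P ⟶ pullback f vh) := by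
  obtain ⟨X', Y', iX, pX, iY, pY, e1, e2, wcomm, WiX, FpX, WiY, FpY, Wl⟩ := hc
  have mcomm : (h ≫ iX) ≫ pX = k ≫ g := by rw [Category.assoc, e1, hpb.w]
  set m : P ⟶ pullback pX g := pullback.lift (h ≫ iX) k mcomm with hm
  -- comparison α : X' ×_B Y ⟶ X' ×_B Y'
  have hα := aux_snd (p := pX) iY e2 (IsPullback.of_hasPullback pX g)
  have Wα := hS _ _ _ iY hα (S.fib_snd pX pY FpX) WiY
  have hml : m ≫ pullback.lift (pullback.fst pX g) (pullback.snd pX g ≫ iY)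
      (by rw [Category.assoc, e2, pullback.condition]) =
      pullback.lift (h ≫ iX) (k ≫ iY) wcomm := by
    apply pullback.hom_ext
    · simp only [Category.assoc]
      erw [pullback.lift_fst, pullback.lift_fst, pullback.lift_fst]
    · simp only [Category.assoc]
      erw [pullback.lift_snd, pullback.lift_snd, hm, pullback.lift_snd_assoc]
  have Wm : S.W m := S.w_cancel_right m _ Wα (by rw [hml]; exact Wl)
  -- comparison β : X' ×_B Y ⟶ X' ×_B Yh
  have hβ := aux_snd (p := pX) u huv (IsPullback.of_hasPullback pX g)
  have Wβ := hS _ _ _ u hβ (S.fib_snd pX vh FpX) hu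
  -- comparison γ : X ×_B Yh ⟶ X' ×_B Yh
  have hγ := aux_fst (q := vh) iX e1 (IsPullback.of_hasPullback f vh)
  have Wγ := hS _ _ _ iX hγ (S.fib_fst pX vh hv) WiX
  have comm : (pullback.lift h (k ≫ u) (by rw [Category.assoc, huv, hpb.w]) :
        P ⟶ pullback f vh) ≫
      pullback.lift (pullback.fst f vh ≫ iX) (pullback.snd f vh)
        (by rw [Category.assoc, e1, pullback.condition]) =
      m ≫ pullback.lift (pullback.fst pX g) (pullback.snd pX g ≫ u)
        (by rw [Category.assoc, huv, pullback.condition]) := by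
    apply pullback.hom_ext
    · simp only [Category.assoc]
      erw [pullback.lift_fst, pullback.lift_fst, pullback.lift_fst_assoc, hm, pullback.lift_fst]
    · simp only [Category.assoc]
      erw [pullback.lift_snd, pullback.lift_snd, pullback.lift_snd, hm, pullback.lift_snd_assoc]
  refine S.w_cancel_right _ _ Wγ ?_
  rw [comm]
  exact S.w_comp _ _ Wm Wβ

/-- In a right proper model category, a map `g : Y ⟶ B` is sharp if and only if every
pullback square along `g` is homotopy cartesian. -/
theorem statement3 [HasFiniteLimits M] [HasFiniteColimits M] (S : ModelStructure M)
    (hS : S.RightProper) {Y B : M} (g : Y ⟶ B) :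
    Sharp S.W g ↔
      ∀ ⦃P X : M⦄ (h : P ⟶ X) (k : P ⟶ Y) (f : X ⟶ B),
        IsPullback h k f g → HomotopyCartesian S.W S.Fib h k f g := by
  constructor
  · intro sharp P X h k f hpb
    obtain ⟨X', iX, pX, hc1, hw1, hf1, e1⟩ := S.fact_triv_cof_fib f
    obtain ⟨Yh, u, vh, hc2, hw2, hf2, e2⟩ := S.fact_triv_cof_fib g
    refine ⟨X', Yh, iX, pX, u, vh, e1, e2,
      (by rw [Category.assoc, e1, Category.assoc, e2, hpb.w]), hw1, hf1, hw2, hf2, ?_⟩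
    have mcomm : (h ≫ iX) ≫ pX = k ≫ g := by rw [Category.assoc, e1, hpb.w]
    have hm := aux_fst (q := g) iX e1 hpb
    have Wm : S.W (pullback.lift (h ≫ iX) k mcomm) :=
      sharp _ h (pullback.snd pX g) (pullback.fst pX g) iX pX
        (IsPullback.of_hasPullback pX g).flip hm hw1
    have hn := aux_snd (p := pX) u e2 (IsPullback.of_hasPullback pX g)
    have Wn := hS _ _ _ u hn (S.fib_snd pX vh hf1) hw2
    have comm : pullback.lift (h ≫ iX) (k ≫ u)
        (by rw [Category.assoc, e1, Category.assoc, e2, hpb.w]) =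
        pullback.lift (h ≫ iX) k mcomm ≫
          pullback.lift (pullback.fst pX g) (pullback.snd pX g ≫ u)
            (by rw [Category.assoc, e2, pullback.condition]) := by
      apply pullback.hom_ext
      · simp only [Category.assoc]
        erw [pullback.lift_fst, pullback.lift_fst, pullback.lift_fst]
      · simp only [Category.assoc]
        erw [pullback.lift_snd, pullback.lift_snd, pullback.lift_snd_assoc]
    rw [comm]
    exact S.w_comp _ _ Wm Wn
  · intro H A A' B₀ B₀' i p t' p' j g' hPB' hPB hWj
    obtain ⟨Yh, u, vh, hc2, hw2, hf2, e2⟩ := S.fact_triv_cof_fib g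
    have sq1 : IsPullback p' t' g' g := hPB'.flip
    have sq2 : IsPullback p (i ≫ t') (j ≫ g') g := (hPB.paste_horiz hPB').flip
    have Wm' := key S hS hw2 hf2 e2 sq1 (H p' t' g' sq1)
    have Wm := key S hS hw2 hf2 e2 sq2 (H p (i ≫ t') (j ≫ g') sq2)
    have hδ := aux_fst (q := vh) j rfl (IsPullback.of_hasPullback (j ≫ g') vh)
    have Wδ := hS _ _ _ j hδ (S.fib_fst g' vh hf2) hWj
    have comm : i ≫ pullback.lift p' (t' ≫ u) (by rw [Category.assoc, e2, sq1.w]) =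
        pullback.lift p ((i ≫ t') ≫ u) (by rw [Category.assoc, e2, sq2.w]) ≫
          pullback.lift (pullback.fst (j ≫ g') vh ≫ j) (pullback.snd (j ≫ g') vh)
            (by rw [Category.assoc]; exact pullback.condition) := by
      apply pullback.hom_ext
      · simp only [Category.assoc]
        erw [pullback.lift_fst, pullback.lift_fst, pullback.lift_fst_assoc, hPB.w]
      · simp only [Category.assoc]
        erw [pullback.lift_snd, pullback.lift_snd, pullback.lift_snd]
    refine S.w_cancel_right i _ Wm' ?_
    rw [comm]
    exact S.w_comp _ _ Wm Wδ

end Paper
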